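/- Fix U > 0 and f : ℕ₀×ℕ₀ → [0,∞) satisfying: the counting function N(T) = #{(m,n) ∈ ℕ² : U(m+n)+f(m,n) ≤ T} satisfies N(T) ≤ K T^α for some K > 0 and α ∈ [0,1). Let Z_sing(β) = Σ_{n≥1} e^{-βUn}, Z_dim(β) = Σ_{m,n≥1} e^{-βU(m+n)-βf(m,n)}, and Δ(β) = (1/β) log(Z_sing(β)²/Z_dim(β)). Then there exist β₀ > 0 and a constant C₀ such that for all β ∈ (0,β₀): Δ(β) ≥ (2-α)|log β|/β - C₀/β. In particular, for any C ∈ (1, 2-α) and β sufficiently small, Δ(β) ≥ C|log β|/β. -/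

import Mathlib

open Real

lemma two_e_le : 2 * Real.exp (-1) ≤ 3/4 := by
    rw [Real.exp_neg]
    rw [mul_comm, ← le_div_iff₀ (by norm_num : (0:ℝ) < 2)]
    rw [inv_le_comm₀ (Real.exp_pos 1) (by norm_num)]
    calc (3/4/2 : ℝ)⁻¹ = 8/3 := by norm_num
    _ ≤ 2.7182818283 := by norm_num
    _ ≤ Real.exp 1 := le_of_lt Real.exp_one_gt_d9

lemma two_e_lt_one : 2 * Real.exp (-1) < 1 := lt_of_le_of_lt two_e_le (by norm_num)

lemma geom_aux : ∑' j : ℕ, (2 * Real.exp (-1)) ^ j ≤ 4 := by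
  have hr0 : (0:ℝ) ≤ 2 * Real.exp (-1) := by positivity
  have hr1 := two_e_le
  rw [tsum_geometric_of_lt_one hr0 two_e_lt_one]
  rw [inv_le_comm₀ (by linarith) (by norm_num)]
  linarith

lemma zdim_key (U : ℝ) (hU : 0 < U) (f : ℕ → ℕ → ℝ) (hf : ∀ m n, 0 ≤ f m n)
    (K α : ℝ) (hK : 0 < K) (hα0 : 0 ≤ α) (hα1 : α < 1)
    (hfin : ∀ T : ℝ, {q : ℕ × ℕ | 0 < q.1 ∧ 0 < q.2 ∧
        U * (q.1 + q.2) + f q.1 q.2 ≤ T}.Finite)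
    (hN : ∀ T : ℝ, 0 ≤ T →
      (({q : ℕ × ℕ | 0 < q.1 ∧ 0 < q.2 ∧
          U * (q.1 + q.2) + f q.1 q.2 ≤ T}.ncard : ℝ)) ≤ K * T ^ α)
    (β : ℝ) (hβ : 0 < β) :
    ∑' q : {q : ℕ × ℕ // 0 < q.1 ∧ 0 < q.2},
      ENNReal.ofReal (Real.exp (-β * U * ((q : ℕ × ℕ).1 + (q : ℕ × ℕ).2)
         - β * f (q : ℕ × ℕ).1 (q : ℕ × ℕ).2))
      ≤ ENNReal.ofReal (4 * (K * (1/β) ^ α)) := by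
  classical
  set E : ℕ × ℕ → ℝ := fun q => U * (q.1 + q.2) + f q.1 q.2 with hE
  set A : ℕ → Set (ℕ × ℕ) := fun j => {q : ℕ × ℕ | 0 < q.1 ∧ 0 < q.2 ∧
        U * (q.1 + q.2) + f q.1 q.2 ≤ ((j:ℝ)+1)/β} with hA
  have hEnn : ∀ q : ℕ × ℕ, 0 ≤ E q := by
    intro q
    have := hf q.1 q.2
    have : (0:ℝ) ≤ U * (q.1 + q.2) := by positivity
    simp only [hE]
    nlinarith [hf q.1 q.2]
  -- pointwise bound
  have step1 : ∀ q : {q : ℕ × ℕ // 0 < q.1 ∧ 0 < q.2},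
      ENNReal.ofReal (Real.exp (-β * U * ((q : ℕ × ℕ).1 + (q : ℕ × ℕ).2)
         - β * f (q : ℕ × ℕ).1 (q : ℕ × ℕ).2))
      ≤ ∑' j : ℕ, ENNReal.ofReal (Real.exp (-1)) ^ j
          * (A j).indicator (1 : ℕ × ℕ → ENNReal) (q : ℕ × ℕ) := by
    intro q
    set j0 : ℕ := ⌊β * E q.1⌋₊ with hj0
    have hmem : (q : ℕ × ℕ) ∈ A j0 := by
      refine ⟨q.2.1, q.2.2, ?_⟩
      have h1 : β * E q.1 < (j0:ℝ) + 1 := Nat.lt_floor_add_one _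
      rw [le_div_iff₀ hβ]
      calc E q.1 * β = β * E q.1 := by ring
      _ ≤ (j0:ℝ) + 1 := le_of_lt h1
    have hexp : Real.exp (-β * U * ((q:ℕ×ℕ).1 + (q:ℕ×ℕ).2) - β * f (q:ℕ×ℕ).1 (q:ℕ×ℕ).2)
        ≤ Real.exp (-1) ^ j0 := by
      have h2 : (j0:ℝ) ≤ β * E q.1 := Nat.floor_le (mul_nonneg hβ.le (hEnn _))
      have : -β * U * ((q:ℕ×ℕ).1 + (q:ℕ×ℕ).2) - β * f (q:ℕ×ℕ).1 (q:ℕ×ℕ).2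
          = -(β * E q.1) := by simp only [hE]; ring
      rw [this, ← Real.exp_nat_mul]
      exact Real.exp_le_exp.2 (by nlinarith)
    calc ENNReal.ofReal (Real.exp (-β * U * ((q:ℕ×ℕ).1 + (q:ℕ×ℕ).2) - β * f (q:ℕ×ℕ).1 (q:ℕ×ℕ).2))
        ≤ ENNReal.ofReal (Real.exp (-1) ^ j0) := ENNReal.ofReal_le_ofReal hexp
      _ = ENNReal.ofReal (Real.exp (-1)) ^ j0 * (A j0).indicator (1 : ℕ×ℕ → ENNReal) (q:ℕ×ℕ) := by
          rw [Set.indicator_of_mem hmem, ENNReal.ofReal_pow (Real.exp_pos _).le]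
          simp
      _ ≤ _ := ENNReal.le_tsum j0
  calc ∑' q : {q : ℕ × ℕ // 0 < q.1 ∧ 0 < q.2},
      ENNReal.ofReal (Real.exp (-β * U * ((q : ℕ × ℕ).1 + (q : ℕ × ℕ).2)
         - β * f (q : ℕ × ℕ).1 (q : ℕ × ℕ).2))
      ≤ ∑' q : {q : ℕ × ℕ // 0 < q.1 ∧ 0 < q.2}, ∑' j : ℕ,
          ENNReal.ofReal (Real.exp (-1)) ^ j
          * (A j).indicator (1 : ℕ × ℕ → ENNReal) (q : ℕ × ℕ) := ENNReal.tsum_le_tsum step1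
    _ = ∑' j : ℕ, ∑' q : {q : ℕ × ℕ // 0 < q.1 ∧ 0 < q.2},
          ENNReal.ofReal (Real.exp (-1)) ^ j
          * (A j).indicator (1 : ℕ × ℕ → ENNReal) (q : ℕ × ℕ) := ENNReal.tsum_comm
    _ = ∑' j : ℕ, ENNReal.ofReal (Real.exp (-1)) ^ j
          * ∑' q : {q : ℕ × ℕ // 0 < q.1 ∧ 0 < q.2},
            (A j).indicator (1 : ℕ × ℕ → ENNReal) (q : ℕ × ℕ) := by
        congr 1; funext j; exact ENNReal.tsum_mul_left
    _ ≤ ∑' j : ℕ, ENNReal.ofReal (K * (1/β)^α * (2 * Real.exp (-1)) ^ j) := by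
        apply ENNReal.tsum_le_tsum
        intro j
        have hsub : A j ⊆ {q : ℕ × ℕ | 0 < q.1 ∧ 0 < q.2} := fun q hq => ⟨hq.1, hq.2.1⟩
        have hcard : ∑' q : {q : ℕ × ℕ // 0 < q.1 ∧ 0 < q.2},
            (A j).indicator (1 : ℕ × ℕ → ENNReal) (q : ℕ × ℕ)
            = ((A j).ncard : ENNReal) := by
          have h0 : ∑' (q : {q : ℕ × ℕ // 0 < q.1 ∧ 0 < q.2}),
              (A j).indicator (1 : ℕ × ℕ → ENNReal) ↑q
              = ∑' q : ℕ × ℕ, ({q : ℕ × ℕ | 0 < q.1 ∧ 0 < q.2}).indicator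
                  ((A j).indicator (1 : ℕ × ℕ → ENNReal)) q :=
            tsum_subtype _ _
          rw [h0, Set.indicator_indicator, Set.inter_eq_self_of_subset_right hsub]
          have hAfin : (A j).Finite := hfin (((j:ℝ)+1)/β)
          rw [tsum_eq_sum (s := hAfin.toFinset)
            (fun b hb => Set.indicator_of_notMem (fun hmem => hb (hAfin.mem_toFinset.2 hmem)) _)]
          rw [Set.ncard_eq_toFinset_card _ hAfin]
          rw [Finset.sum_congr rfl (fun b hb => Set.indicator_of_mem (hAfin.mem_toFinset.1 hb) _)]
          simp
        rw [hcard]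
        have hT : (0:ℝ) ≤ ((j:ℝ)+1)/β := by positivity
        have hNj : ((A j).ncard : ℝ) ≤ K * (((j:ℝ)+1)/β) ^ α := hN _ hT
        have hre : Real.exp (-1) ^ j * (K * (((j:ℝ)+1)/β) ^ α)
            ≤ K * (1/β)^α * (2 * Real.exp (-1)) ^ j := by
          have h1 : (((j:ℝ)+1)/β) ^ α = ((j:ℝ)+1)^α * (1/β)^α := by
            rw [div_eq_mul_one_div, Real.mul_rpow (by positivity) (by positivity)]
          have h2 : ((j:ℝ)+1)^α ≤ (j:ℝ)+1 := by
            calc ((j:ℝ)+1)^α ≤ ((j:ℝ)+1)^(1:ℝ) :=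
              Real.rpow_le_rpow_of_exponent_le (by have := Nat.cast_nonneg (α := ℝ) j; linarith) hα1.le
            _ = (j:ℝ)+1 := Real.rpow_one _
          have h3 : ((j:ℝ)+1) ≤ 2^j := by
            have := Nat.lt_two_pow_self (n := j)
            calc ((j:ℝ)+1) = ((j+1 : ℕ) : ℝ) := by push_cast; ring
            _ ≤ ((2^j : ℕ) : ℝ) := Nat.cast_le.2 (Nat.lt_two_pow_self (n := j))
            _ = 2^j := by push_cast; ring
          have hb : (0:ℝ) ≤ (1/β)^α := by positivity
          have he : (0:ℝ) < Real.exp (-1) ^ j := by positivity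
          calc Real.exp (-1) ^ j * (K * (((j:ℝ)+1)/β) ^ α)
              = K * (1/β)^α * (((j:ℝ)+1)^α * Real.exp (-1) ^ j) := by rw [h1]; ring
            _ ≤ K * (1/β)^α * (2^j * Real.exp (-1) ^ j) := by
                apply mul_le_mul_of_nonneg_left _ (by positivity)
                apply mul_le_mul_of_nonneg_right _ he.le
                exact h2.trans h3
            _ = K * (1/β)^α * (2 * Real.exp (-1)) ^ j := by rw [mul_pow]
        calc ENNReal.ofReal (Real.exp (-1)) ^ j * ((A j).ncard : ENNReal)
            = ENNReal.ofReal (Real.exp (-1) ^ j * ((A j).ncard : ℝ)) := by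
              rw [ENNReal.ofReal_mul (by positivity), ENNReal.ofReal_pow (Real.exp_pos _).le,
                ENNReal.ofReal_natCast]
          _ ≤ ENNReal.ofReal (Real.exp (-1) ^ j * (K * (((j:ℝ)+1)/β) ^ α)) := by
              apply ENNReal.ofReal_le_ofReal
              exact mul_le_mul_of_nonneg_left hNj (by positivity)
          _ ≤ _ := ENNReal.ofReal_le_ofReal hre
    _ = ENNReal.ofReal (∑' j : ℕ, K * (1/β)^α * (2 * Real.exp (-1)) ^ j) := by
        rw [ENNReal.ofReal_tsum_of_nonneg (fun j => by positivity)]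
        exact (summable_geometric_of_lt_one (by positivity) two_e_lt_one).mul_left _
    _ ≤ ENNReal.ofReal (4 * (K * (1/β) ^ α)) := by
        apply ENNReal.ofReal_le_ofReal
        rw [tsum_mul_left]
        have hb : (0:ℝ) ≤ K * (1/β)^α := by positivity
        calc K * (1/β)^α * ∑' j : ℕ, (2 * Real.exp (-1)) ^ j
            ≤ K * (1/β)^α * 4 := mul_le_mul_of_nonneg_left geom_aux hb
          _ = 4 * (K * (1/β)^α) := by ring

lemma zsing_ge (U β : ℝ) (hU : 0 < U) (hβ : 0 < β) :
    Real.exp (-(β*U)) / (β*U) ≤ ∑' n : ℕ, Real.exp (-β * U * (n + 1)) := by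
  set r := Real.exp (-(β*U)) with hr
  have hr0 : 0 < r := Real.exp_pos _
  have hr1 : r < 1 := Real.exp_lt_one_iff.2 (by nlinarith)
  have hs : HasSum (fun n : ℕ => Real.exp (-β * U * (n + 1))) (r * (1-r)⁻¹) := by
    have h := (hasSum_geometric_of_lt_one hr0.le hr1).mul_left r
    convert h using 2 with n
    show Real.exp (-β * U * (n + 1)) = r * r ^ n
    rw [hr, ← Real.exp_nat_mul, ← Real.exp_add]
    congr 1; ring
    rfl
  rw [hs.tsum_eq]
  have h1 : 1 - r ≤ β*U := by have := Real.add_one_le_exp (-(β*U)); simp only [hr]; linarith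
  have h2 : 0 < 1 - r := by linarith
  rw [div_eq_mul_inv]
  exact mul_le_mul_of_nonneg_left (inv_anti₀ h2 h1) hr0.le


/-- Dimer-excess bound. Under (F4), the dimer excess
`Δ(β) = (1/β) log (Z_sing² / Z_dim)` satisfies
`Δ(β) ≥ (2-α)|log β|/β - C₀/β` for small `β`; in particular
`Δ(β) ≥ C |log β|/β` for any `C ∈ (1, 2-α)` and `β` small. -/
theorem dimer_excess (U : ℝ) (hU : 0 < U) (f : ℕ → ℕ → ℝ) (hf : ∀ m n, 0 ≤ f m n)
    (K α : ℝ) (hK : 0 < K) (hα0 : 0 ≤ α) (hα1 : α < 1)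
    (hfin : ∀ T : ℝ, {q : ℕ × ℕ | 0 < q.1 ∧ 0 < q.2 ∧
        U * (q.1 + q.2) + f q.1 q.2 ≤ T}.Finite)
    (hN : ∀ T : ℝ, 0 ≤ T →
      (({q : ℕ × ℕ | 0 < q.1 ∧ 0 < q.2 ∧
          U * (q.1 + q.2) + f q.1 q.2 ≤ T}.ncard : ℝ)) ≤ K * T ^ α)
    (Zsing Zdim Δ : ℝ → ℝ)
    (hZs : ∀ β : ℝ, 0 < β → Zsing β = ∑' n : ℕ, Real.exp (-β * U * (n + 1)))
    (hZd : ∀ β : ℝ, 0 < β → Zdim β =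
      ∑' q : {q : ℕ × ℕ // 0 < q.1 ∧ 0 < q.2},
        Real.exp (-β * U * ((q : ℕ × ℕ).1 + (q : ℕ × ℕ).2)
          - β * f (q : ℕ × ℕ).1 (q : ℕ × ℕ).2))
    (hΔ : ∀ β : ℝ, 0 < β → Δ β = (1 / β) * Real.log ((Zsing β) ^ 2 / Zdim β)) :
    (∃ β₀ > (0 : ℝ), ∃ C₀ : ℝ, ∀ β : ℝ, 0 < β → β < β₀ →
        Δ β ≥ (2 - α) * |Real.log β| / β - C₀ / β) ∧
    (∀ C : ℝ, 1 < C → C < 2 - α → ∃ β₁ > (0 : ℝ), ∀ β : ℝ, 0 < β → β < β₁ →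
        Δ β ≥ C * |Real.log β| / β) := by
  have key : ∀ β : ℝ, 0 < β → β < min 1 (1/U) →
      Δ β ≥ (2 - α) * |Real.log β| / β - (Real.log (36*U^2*K)) / β := by
    intro β hβ hβ'
    have hβ1 : β < 1 := lt_of_lt_of_le hβ' (min_le_left _ _)
    have hβU : β * U ≤ 1 := by
      have h := lt_of_lt_of_le hβ' (min_le_right _ _)
      rw [lt_div_iff₀ hU] at h; linarith
    -- Zsing lower bound
    have hS : 1/(3*(U*β)) ≤ Zsing β := by
      rw [hZs β hβ]
      refine le_trans ?_ (zsing_ge U β hU hβ)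
      have h3 : Real.exp 1 ≤ 3 := le_of_lt (lt_trans Real.exp_one_lt_d9 (by norm_num))
      have h1 : (1:ℝ)/3 ≤ Real.exp (-(β*U)) := by
        calc (1:ℝ)/3 = 3⁻¹ := by norm_num
        _ ≤ (Real.exp 1)⁻¹ := inv_anti₀ (Real.exp_pos 1) h3
        _ = Real.exp (-1) := by rw [Real.exp_neg]
        _ ≤ Real.exp (-(β*U)) := Real.exp_le_exp.2 (by linarith)
      have heq : 1/(3*(U*β)) = (1/3)/(β*U) := by rw [div_div, mul_comm U β]
      rw [heq]
      gcongr
    have hSpos : 0 < Zsing β := lt_of_lt_of_le (by positivity) hS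
    -- Zdim bounds
    have hkey := zdim_key U hU f hf K α hK hα0 hα1 hfin hN β hβ
    have hMpos : (0:ℝ) < 4*(K*(1/β)^α) := by positivity
    have hTne : (∑' q : {q : ℕ × ℕ // 0 < q.1 ∧ 0 < q.2},
        ENNReal.ofReal (Real.exp (-β * U * ((q : ℕ × ℕ).1 + (q : ℕ × ℕ).2)
          - β * f (q : ℕ × ℕ).1 (q : ℕ × ℕ).2))) ≠ ⊤ :=
      ne_top_of_le_ne_top ENNReal.ofReal_ne_top hkey
    have hsum : Summable (fun q : {q : ℕ × ℕ // 0 < q.1 ∧ 0 < q.2} =>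
        Real.exp (-β * U * ((q : ℕ × ℕ).1 + (q : ℕ × ℕ).2)
          - β * f (q : ℕ × ℕ).1 (q : ℕ × ℕ).2)) := by
      have h := ENNReal.summable_toReal hTne
      convert h using 2 with q
      rw [ENNReal.toReal_ofReal (Real.exp_pos _).le]
    have hDle : Zdim β ≤ 4*(K*(1/β)^α) := by
      rw [hZd β hβ, ← ENNReal.ofReal_le_ofReal_iff hMpos.le,
        ENNReal.ofReal_tsum_of_nonneg (fun q => (Real.exp_pos _).le) hsum]
      exact hkey
    have hDpos : 0 < Zdim β := by
      rw [hZd β hβ]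
      exact Summable.tsum_pos hsum (fun q => (Real.exp_pos _).le) ⟨(1,1), by norm_num⟩ (Real.exp_pos _)
    -- ratio lower bound
    have heq2 : (1/(3*(U*β)))^2 / (4*K*(1/β)^α) = β ^ α / (36*U^2*K*β^2) := by
      rw [one_div β, Real.inv_rpow hβ.le]
      have hβα : (0:ℝ) < β ^ α := Real.rpow_pos_of_pos hβ α
      rw [div_eq_div_iff (by positivity) (by positivity)]
      field_simp
      ring
    have hRlow : β ^ α / (36*U^2*K*β^2) ≤ (Zsing β)^2 / Zdim β := by
      rw [← heq2]
      have h4 : Zdim β ≤ 4*K*(1/β)^α := by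
        calc Zdim β ≤ 4*(K*(1/β)^α) := hDle
        _ = 4*K*(1/β)^α := by ring
      exact div_le_div₀ (sq_nonneg _) (pow_le_pow_left₀ (by positivity) hS 2) hDpos h4
    have hr0 : (0:ℝ) < β ^ α / (36*U^2*K*β^2) := by positivity
    have hlog : Real.log ((Zsing β)^2 / Zdim β) ≥ (α-2)*Real.log β - Real.log (36*U^2*K) := by
      have h5 := Real.log_le_log hr0 hRlow
      have h6 : Real.log (β ^ α / (36*U^2*K*β^2))
          = α * Real.log β - (Real.log (36*U^2*K) + 2 * Real.log β) := by
        rw [Real.log_div (by positivity) (by positivity), Real.log_rpow hβ,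
          Real.log_mul (by positivity) (by positivity), Real.log_pow]
        push_cast; ring
      rw [h6] at h5; linarith
    rw [hΔ β hβ, ge_iff_le, abs_of_neg (Real.log_neg hβ hβ1)]
    have hring : (2-α)*(-Real.log β)/β - Real.log (36*U^2*K)/β
        = (1/β)*((α-2)*Real.log β - Real.log (36*U^2*K)) := by ring
    rw [hring]
    exact mul_le_mul_of_nonneg_left hlog (by positivity)
  have hβ₀pos : (0:ℝ) < min 1 (1/U) := lt_min (by norm_num) (by positivity)
  constructor
  · exact ⟨min 1 (1/U), hβ₀pos, Real.log (36*U^2*K), key⟩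
  · intro C hC1 hC2
    set C₀ := Real.log (36*U^2*K) with hC₀
    have hdpos : (0:ℝ) < 2 - α - C := by linarith
    refine ⟨min (min 1 (1/U)) (Real.exp (-(max C₀ 0 + 1)/(2-α-C))),
      lt_min hβ₀pos (Real.exp_pos _), ?_⟩
    intro β hβ hβ'
    have h1 := key β hβ (lt_of_lt_of_le hβ' (min_le_left _ _))
    have h2 : β < Real.exp (-(max C₀ 0 + 1)/(2-α-C)) := lt_of_lt_of_le hβ' (min_le_right _ _)
    have hL2 : Real.log β < -((max C₀ 0 + 1)/(2-α-C)) := by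
      calc Real.log β < Real.log (Real.exp (-(max C₀ 0 + 1)/(2-α-C))) := Real.log_lt_log hβ h2
      _ = -(max C₀ 0 + 1)/(2-α-C) := Real.log_exp _
      _ = -((max C₀ 0 + 1)/(2-α-C)) := by ring
    have hq : (0:ℝ) < (max C₀ 0 + 1)/(2-α-C) := by
      apply div_pos _ hdpos
      have := le_max_right C₀ (0:ℝ); linarith
    have hLneg : Real.log β < 0 := by linarith
    have habs : |Real.log β| = -Real.log β := abs_of_neg hLneg
    have h3 : C₀ ≤ (2-α-C) * |Real.log β| := by
      rw [habs]
      have h4 : (max C₀ 0 + 1) < (2-α-C) * (-Real.log β) := by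
        have h5 : (max C₀ 0 + 1)/(2-α-C) < -Real.log β := by linarith
        rw [div_lt_iff₀ hdpos] at h5
        linarith [mul_comm (max C₀ 0 + 1 : ℝ) (2-α-C), h5]
      have h6 : C₀ ≤ max C₀ 0 := le_max_left _ _
      nlinarith
    have hfin2 : C * |Real.log β| / β ≤ ((2-α)*|Real.log β| - C₀)/β := by
      apply (div_le_div_iff_of_pos_right hβ).2
      nlinarith [abs_nonneg (Real.log β)]
    have heq3 : (2-α)*|Real.log β|/β - C₀/β = ((2-α)*|Real.log β| - C₀)/β := by ring
    rw [ge_iff_le]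
    calc C * |Real.log β| / β ≤ ((2-α)*|Real.log β| - C₀)/β := hfin2
    _ = (2-α)*|Real.log β|/β - C₀/β := heq3.symm
    _ ≤ Δ β := h1
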